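/- (Gap Safe Moon region) For the Lasso-like problem with 1-strongly convex f*(-θ) = (1/2)‖θ‖₂² - yᵀθ, let θ̂ be the dual maximizer. For any β̃ and any θ̃ with g*(X^Tθ̃)=0, θ̂ ∈ { θ : -(1/2)‖θ‖₂² + yᵀθ ≤ P(β̃) and (θ̃ - θ)ᵀ(y - θ) ≤ 0 }, where P(β̃) = (1/2)‖y - Xβ̃‖₂² + g(β̃). -/

import Mathlib

open Matrix

noncomputable def fenchelConj {m : ℕ} (h : (Fin m → ℝ) → EReal) (v : Fin m → ℝ) : EReal :=
  ⨆ z : Fin m → ℝ, ((v ⬝ᵥ z : ℝ) : EReal) - h z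

def ERealConvexOn {m : ℕ} (h : (Fin m → ℝ) → EReal) : Prop :=
  ∀ z w : Fin m → ℝ, ∀ a b : ℝ, 0 ≤ a → 0 ≤ b → a + b = 1 →
    h (a • z + b • w) ≤ (a : EReal) * h z + (b : EReal) * h w

private lemma ereal_sub_nonpos_of_le {a : ℝ} {x : EReal} (h : (a : EReal) ≤ x) :
    (a : EReal) - x ≤ 0 := by
  induction x using EReal.rec with
  | bot => exact absurd h (by simp)
  | coe b =>
    rw [← EReal.coe_sub]
    exact_mod_cast sub_nonpos.2 (by exact_mod_cast h)
  | top => rw [EReal.sub_top]; exact bot_le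

private lemma ereal_le_of_sub_nonpos {a : ℝ} {x : EReal} (hx : x ≠ ⊥)
    (h : (a : EReal) - x ≤ 0) : (a : EReal) ≤ x := by
  induction x using EReal.rec with
  | bot => exact absurd rfl hx
  | coe b =>
    rw [← EReal.coe_sub] at h
    exact_mod_cast sub_nonpos.1 (by exact_mod_cast h)
  | top => exact le_top

private lemma dot_self_nonneg {m : ℕ} (v : Fin m → ℝ) : 0 ≤ v ⬝ᵥ v :=
  Finset.sum_nonneg fun i _ => mul_self_nonneg (v i)

/-- Gap Safe Moon region for Lasso-like problems. -/
theorem gap_safe_moon_region {n d : ℕ}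
    (g : (Fin d → ℝ) → EReal) (X : Matrix (Fin n) (Fin d) ℝ) (y : Fin n → ℝ)
    (hg_top : ∃ z, g z ≠ ⊤) (hg_bot : ∀ z, g z ≠ ⊥)
    (hg_lsc : LowerSemicontinuous g) (hg_conv : ERealConvexOn g)
    (hpos : ∀ (k : ℝ), 0 ≤ k → ∀ β : Fin d → ℝ, g (k • β) = (k : EReal) * g β)
    (D : (Fin n → ℝ) → EReal)
    (hD : ∀ θ, D θ = ((y ⬝ᵥ θ - 1 / 2 * (θ ⬝ᵥ θ) : ℝ) : EReal) - fenchelConj g (Xᵀ *ᵥ θ))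
    (θh : Fin n → ℝ) (hmax : ∀ θ, D θ ≤ D θh)
    (βt : Fin d → ℝ) (θt : Fin n → ℝ) (hθt : fenchelConj g (Xᵀ *ᵥ θt) = 0) :
    θh ∈ {θ : Fin n → ℝ |
      ((y ⬝ᵥ θ - 1 / 2 * (θ ⬝ᵥ θ) : ℝ) : EReal) ≤
        ((1 / 2 * ((y - X *ᵥ βt) ⬝ᵥ (y - X *ᵥ βt)) : ℝ) : EReal) + g βt ∧
      (θt - θ) ⬝ᵥ (y - θ) ≤ 0} := by
  -- g 0 = 0
  have hg0 : g 0 = 0 := by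
    obtain ⟨z, hz⟩ := hg_top
    have h := hpos 0 le_rfl z
    rw [zero_smul] at h
    rw [h, EReal.coe_zero]
    obtain ⟨c, hc⟩ : ∃ c : ℝ, g z = c := ⟨(g z).toReal, (EReal.coe_toReal hz (hg_bot z)).symm⟩
    rw [hc]
    exact zero_mul _
  -- fenchelConj g v ≥ 0
  have hFnonneg : ∀ v : Fin d → ℝ, 0 ≤ fenchelConj g v := by
    intro v
    have h : ((v ⬝ᵥ (0 : Fin d → ℝ) : ℝ) : EReal) - g 0 ≤ fenchelConj g v :=
      le_iSup (fun z => ((v ⬝ᵥ z : ℝ) : EReal) - g z) (0 : Fin d → ℝ)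
    simpa [hg0] using h
  have hFle : ∀ (v z : Fin d → ℝ), ((v ⬝ᵥ z : ℝ) : EReal) - g z ≤ fenchelConj g v :=
    fun v z => le_iSup (fun z => ((v ⬝ᵥ z : ℝ) : EReal) - g z) z
  -- fenchelConj g v is 0 or ⊤
  have hFdichot : ∀ v : Fin d → ℝ, fenchelConj g v ≠ ⊤ → fenchelConj g v ≤ 0 := by
    intro v hne
    by_contra hlt
    rw [not_le] at hlt
    apply hne
    rw [EReal.eq_top_iff_forall_lt]
    intro M
    obtain ⟨z, hz⟩ := lt_iSup_iff.1 hlt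
    have hgzt : g z ≠ ⊤ := by
      intro h
      rw [h, EReal.sub_top] at hz
      exact absurd hz (by simp)
    obtain ⟨c, hc⟩ : ∃ c : ℝ, g z = c := ⟨(g z).toReal, (EReal.coe_toReal hgzt (hg_bot z)).symm⟩
    rw [hc, ← EReal.coe_sub] at hz
    have ha : 0 < v ⬝ᵥ z - c := by exact_mod_cast hz
    set k : ℝ := max 1 ((M + 1) / (v ⬝ᵥ z - c)) with hk
    have hk0 : (0 : ℝ) ≤ k := le_trans zero_le_one (le_max_left _ _)
    have hk1 : (M + 1) / (v ⬝ᵥ z - c) ≤ k := le_max_right _ _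
    have hMk : M + 1 ≤ k * (v ⬝ᵥ z - c) := by
      rw [div_le_iff₀ ha] at hk1
      linarith
    have hterm := hFle v (k • z)
    rw [hpos k hk0 z, hc, ← EReal.coe_mul, dotProduct_smul, smul_eq_mul,
      ← EReal.coe_sub] at hterm
    refine lt_of_lt_of_le ?_ hterm
    exact_mod_cast (by nlinarith : M < k * (v ⬝ᵥ z) - k * c)
  set G := fenchelConj g (Xᵀ *ᵥ θh) with hGdef
  have hGtop : G ≠ ⊤ := by
    intro h
    have h1 := hmax θt
    rw [hD θt, hθt, sub_zero, hD θh, ← hGdef, h, EReal.sub_top] at h1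
    exact EReal.coe_ne_bot _ (le_bot_iff.1 h1)
  have hG0 : G = 0 := le_antisymm (hFdichot _ hGtop) (hFnonneg _)
  have hle_g : ∀ z : Fin d → ℝ, (((Xᵀ *ᵥ θh) ⬝ᵥ z : ℝ) : EReal) ≤ g z := by
    intro z
    have h := hFle (Xᵀ *ᵥ θh) z
    rw [← hGdef, hG0] at h
    exact ereal_le_of_sub_nonpos (hg_bot z) h
  have hle_gt : ∀ z : Fin d → ℝ, (((Xᵀ *ᵥ θt) ⬝ᵥ z : ℝ) : EReal) ≤ g z := by
    intro z
    have h := hFle (Xᵀ *ᵥ θt) z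
    rw [hθt] at h
    exact ereal_le_of_sub_nonpos (hg_bot z) h
  constructor
  · -- first condition
    have hdotX : (Xᵀ *ᵥ θh) ⬝ᵥ βt = θh ⬝ᵥ (X *ᵥ βt) := by
      rw [mulVec_transpose, ← dotProduct_mulVec]
    have hreal : y ⬝ᵥ θh - 1 / 2 * (θh ⬝ᵥ θh) ≤
        1 / 2 * ((y - X *ᵥ βt) ⬝ᵥ (y - X *ᵥ βt)) + (Xᵀ *ᵥ θh) ⬝ᵥ βt := by
      have hsq := dot_self_nonneg (y - X *ᵥ βt - θh)
      simp only [sub_dotProduct, dotProduct_sub] at hsq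
      rw [hdotX]
      simp only [sub_dotProduct, dotProduct_sub]
      have c1 : y ⬝ᵥ θh = θh ⬝ᵥ y := dotProduct_comm _ _
      have c2 : (X *ᵥ βt) ⬝ᵥ θh = θh ⬝ᵥ (X *ᵥ βt) := dotProduct_comm _ _
      have c3 : (X *ᵥ βt) ⬝ᵥ y = y ⬝ᵥ (X *ᵥ βt) := dotProduct_comm _ _
      linarith
    calc ((y ⬝ᵥ θh - 1 / 2 * (θh ⬝ᵥ θh) : ℝ) : EReal)
        ≤ ((1 / 2 * ((y - X *ᵥ βt) ⬝ᵥ (y - X *ᵥ βt)) + (Xᵀ *ᵥ θh) ⬝ᵥ βt : ℝ) : EReal) := by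
          exact_mod_cast hreal
      _ = ((1 / 2 * ((y - X *ᵥ βt) ⬝ᵥ (y - X *ᵥ βt)) : ℝ) : EReal) +
            (((Xᵀ *ᵥ θh) ⬝ᵥ βt : ℝ) : EReal) := by rw [← EReal.coe_add]
      _ ≤ ((1 / 2 * ((y - X *ᵥ βt) ⬝ᵥ (y - X *ᵥ βt)) : ℝ) : EReal) + g βt :=
          add_le_add_right (hle_g βt) _
  · -- second condition
    set u : Fin n → ℝ := θt - θh with hu
    have key : ∀ s : ℝ, 0 ≤ s → s ≤ 1 →
        s * (u ⬝ᵥ (y - θh)) ≤ s ^ 2 / 2 * (u ⬝ᵥ u) := by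
      intro s hs0 hs1
      set θs : Fin n → ℝ := θh + s • u with hθs
      have hθseq : θs = (1 - s) • θh + s • θt := by
        rw [hθs, hu]; module
      have hvs : Xᵀ *ᵥ θs = (1 - s) • (Xᵀ *ᵥ θh) + s • (Xᵀ *ᵥ θt) := by
        rw [hθseq, mulVec_add, mulVec_smul, mulVec_smul]
      have hFs : fenchelConj g (Xᵀ *ᵥ θs) = 0 := by
        refine le_antisymm ?_ (hFnonneg _)
        refine iSup_le fun z => ?_
        have hdot : (Xᵀ *ᵥ θs) ⬝ᵥ z =
            (1 - s) * ((Xᵀ *ᵥ θh) ⬝ᵥ z) + s * ((Xᵀ *ᵥ θt) ⬝ᵥ z) := by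
          rw [hvs, add_dotProduct, smul_dotProduct, smul_dotProduct, smul_eq_mul, smul_eq_mul]
        rw [hdot]
        apply ereal_sub_nonpos_of_le
        rcases eq_or_ne (g z) ⊤ with hgz | hgz
        · rw [hgz]; exact le_top
        · obtain ⟨w, hw⟩ : ∃ w : ℝ, g z = w :=
            ⟨(g z).toReal, (EReal.coe_toReal hgz (hg_bot z)).symm⟩
          have hA : (Xᵀ *ᵥ θh) ⬝ᵥ z ≤ w := by
            have := hle_g z; rw [hw] at this; exact_mod_cast this
          have hB : (Xᵀ *ᵥ θt) ⬝ᵥ z ≤ w := by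
            have := hle_gt z; rw [hw] at this; exact_mod_cast this
          rw [hw]
          exact_mod_cast (by nlinarith :
            (1 - s) * ((Xᵀ *ᵥ θh) ⬝ᵥ z) + s * ((Xᵀ *ᵥ θt) ⬝ᵥ z) ≤ w)
      have hDs := hmax θs
      rw [hD θs, hFs, sub_zero, hD θh, ← hGdef, hG0, sub_zero] at hDs
      have hr : y ⬝ᵥ θs - 1 / 2 * (θs ⬝ᵥ θs) ≤ y ⬝ᵥ θh - 1 / 2 * (θh ⬝ᵥ θh) := by
        exact_mod_cast hDs
      have e1 : y ⬝ᵥ θs = y ⬝ᵥ θh + s * (y ⬝ᵥ u) := by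
        rw [hθs, dotProduct_add, dotProduct_smul, smul_eq_mul]
      have e2 : θs ⬝ᵥ θs = θh ⬝ᵥ θh + 2 * s * (θh ⬝ᵥ u) + s ^ 2 * (u ⬝ᵥ u) := by
        rw [hθs, dotProduct_add, add_dotProduct, add_dotProduct, dotProduct_smul,
          smul_dotProduct, smul_dotProduct, smul_eq_mul, smul_eq_mul, smul_eq_mul,
          dotProduct_smul, smul_eq_mul, dotProduct_comm u θh]
        ring
      have e3 : u ⬝ᵥ (y - θh) = y ⬝ᵥ u - θh ⬝ᵥ u := by
        rw [dotProduct_sub, dotProduct_comm u y, dotProduct_comm u θh]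
      rw [e1, e2] at hr
      rw [e3]
      nlinarith [hr]
    by_contra hc
    rw [not_le] at hc
    set c : ℝ := u ⬝ᵥ (y - θh) with hcdef
    set q : ℝ := u ⬝ᵥ u with hqdef
    have hq0 : 0 ≤ q := dot_self_nonneg u
    set s : ℝ := min 1 (c / (q + 1)) with hs
    have hs0 : 0 < s := lt_min one_pos (div_pos hc (by linarith))
    have hs1 : s ≤ 1 := min_le_left _ _
    have hs2 : s ≤ c / (q + 1) := min_le_right _ _
    have hk := key s hs0.le hs1
    have hsq : s * q ≤ c := by
      rw [le_div_iff₀ (by linarith : (0:ℝ) < q + 1)] at hs2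
      nlinarith
    nlinarith [hk, mul_pos hs0 hc]
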